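/- For every matroid M of rank r on the ground set {1,…,n}, the element C(M) of F lies in the image of the polynomial ring ℚ[u_1,…,u_r,t_1,…,t_n] in F; that is, the a priori rational function C(M) is a polynomial in u_1,…,u_r and t_1,…,t_n. (For M realized by a rank-r matrix v, this polynomial represents the equivariant Chow class of the matrix orbit closure X_v.) -/

import Mathlib

open scoped Classical

/-- The field of rational functions `F = Frac(ℚ[u_1,…,u_r,t_1,…,t_n])`. -/
abbrev F (r n : ℕ) : Type := FractionRing (MvPolynomial (Fin r ⊕ Fin n) ℚ)

/-- The variable `u_i` viewed in `F`. -/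
noncomputable def U (r n : ℕ) (i : Fin r) : F r n :=
  algebraMap (MvPolynomial (Fin r ⊕ Fin n) ℚ) (F r n) (MvPolynomial.X (Sum.inl i))

/-- The variable `t_j` viewed in `F`. -/
noncomputable def T (r n : ℕ) (j : Fin n) : F r n :=
  algebraMap (MvPolynomial (Fin r ⊕ Fin n) ℚ) (F r n) (MvPolynomial.X (Sum.inr j))

/-- `B(w) = {w_i : w_i ∉ cl_M({w_1,…,w_{i-1}})}`, the lexicographically first basis of `M`
in the list `(w_1,…,w_n)`. -/
def firstBasis {n : ℕ} (M : Matroid (Fin n)) (w : Equiv.Perm (Fin n)) : Set (Fin n) :=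
  {x | x ∉ M.closure (⇑w '' {i | i < w.symm x})}

/-- The rational function
`C(M) = Σ_{w ∈ S_n} [∏_{j ∉ B(w)} ∏_{i=1}^{r} (u_i + t_j)] · ∏_{i=1}^{n−1} (t_{w_{i+1}} − t_{w_i})^{−1}`. -/
noncomputable def Cclass (r n : ℕ) (M : Matroid (Fin n)) : F r n :=
  ∑ w : Equiv.Perm (Fin n),
    (∏ j : Fin n, if j ∈ firstBasis M w then 1
      else ∏ i : Fin r, (U r n i + T r n j)) *
    ∏ i : Fin n, (if h : (i : ℕ) + 1 < n
      then (T r n (w ⟨(i : ℕ) + 1, h⟩) - T r n (w i))⁻¹ else 1)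


open MvPolynomial


noncomputable def tvar (r n : ℕ) (j : Fin n) : MvPolynomial (Fin r ⊕ Fin n) ℚ :=
  X (Sum.inr j)

noncomputable def cfac (r n : ℕ) (w : Equiv.Perm (Fin n)) (i : Fin n) :
    MvPolynomial (Fin r ⊕ Fin n) ℚ :=
  if h : (i : ℕ) + 1 < n then tvar r n (w ⟨(i : ℕ) + 1, h⟩) - tvar r n (w i) else 1

noncomputable def dprod (r n : ℕ) (w : Equiv.Perm (Fin n)) : MvPolynomial (Fin r ⊕ Fin n) ℚ :=
  ∏ i : Fin n, cfac r n w i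

def pairsF (n : ℕ) : Finset (Fin n × Fin n) :=
  Finset.univ.filter (fun p => p.1 < p.2)

lemma mem_pairsF {n : ℕ} {p : Fin n × Fin n} : p ∈ pairsF n ↔ p.1 < p.2 := by
  rw [pairsF, Finset.mem_filter]
  simp

noncomputable def Dpoly (r n : ℕ) : MvPolynomial (Fin r ⊕ Fin n) ℚ :=
  ∏ p ∈ pairsF n, (tvar r n p.2 - tvar r n p.1)

section lemmas
variable {r n : ℕ}

lemma prime_X_sub_X {σ : Type*} {i j : σ} (h : i ≠ j) :
    Prime (X i - X j : MvPolynomial σ ℚ) := by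
  classical
  let e : MvPolynomial σ ℚ ≃ₐ[ℚ] Polynomial (MvPolynomial {b : σ // b ≠ i} ℚ) :=
    (renameEquiv ℚ (Equiv.optionSubtypeNe i).symm).trans (optionEquivLeft ℚ _)
  have h1 : e (X i) = Polynomial.X := by
    simp [e, Equiv.optionSubtypeNe_symm_self, optionEquivLeft_X_none]
  have h2 : e (X j) = Polynomial.C (X ⟨j, h.symm⟩) := by
    simp [e, Equiv.optionSubtypeNe_symm_of_ne h.symm, optionEquivLeft_X_some]
  have key : Prime (e (X i - X j)) := by
    rw [map_sub, h1, h2]; exact Polynomial.prime_X_sub_C _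
  exact (MulEquiv.prime_iff e.toMulEquiv).mp key

lemma X_sub_X_dvd {σ : Type*} {i j k l : σ} (hkl : k ≠ l)
    (hdvd : (X i - X j : MvPolynomial σ ℚ) ∣ (X k - X l)) :
    (k = i ∧ l = j) ∨ (k = j ∧ l = i) := by
  classical
  obtain ⟨c, hc⟩ := hdvd
  let ρ : MvPolynomial σ ℚ →ₐ[ℚ] MvPolynomial σ ℚ :=
    aeval (fun v => if v = i then X j else X v)
  have h0 : ρ (X i - X j) = 0 := by simp [ρ]
  have := congrArg ρ hc
  rw [map_mul, h0, zero_mul, map_sub] at this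
  simp only [ρ, aeval_X] at this
  have hXinj : Function.Injective (X : σ → MvPolynomial σ ℚ) := X_injective
  by_cases hk : k = i <;> by_cases hl : l = i
  · exact absurd (hk.trans hl.symm) hkl
  · left
    refine ⟨hk, ?_⟩
    simp only [if_pos hk, if_neg hl] at this
    have : X j = (X l : MvPolynomial σ ℚ) := by linear_combination this
    exact (hXinj this).symm
  · right
    simp only [if_neg hk, if_pos hl] at this
    have : X k = (X j : MvPolynomial σ ℚ) := by linear_combination this
    exact ⟨hXinj this, hl⟩
  · simp only [if_neg hk, if_neg hl] at this
    have : X k = (X l : MvPolynomial σ ℚ) := by linear_combination this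
    exact absurd (hXinj this) hkl

lemma tvar_prime {a b : Fin n} (h : a ≠ b) : Prime (tvar r n a - tvar r n b) :=
  prime_X_sub_X (fun hh => h (Sum.inr_injective hh))

lemma tvar_dvd {a b e f : Fin n} (hef : e ≠ f)
    (hdvd : (tvar r n a - tvar r n b) ∣ (tvar r n e - tvar r n f)) :
    (e = a ∧ f = b) ∨ (e = b ∧ f = a) := by
  have := X_sub_X_dvd (i := Sum.inr a (α := Fin r)) (fun hh => hef (Sum.inr_injective hh)) hdvd
  rcases this with ⟨h1, h2⟩ | ⟨h1, h2⟩
  · exact Or.inl ⟨Sum.inr_injective h1, Sum.inr_injective h2⟩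
  · exact Or.inr ⟨Sum.inr_injective h1, Sum.inr_injective h2⟩

lemma cfac_prime_or_one (w : Equiv.Perm (Fin n)) (i : Fin n) :
    Prime (cfac r n w i) ∨ cfac r n w i = 1 := by
  unfold cfac
  split
  · left
    apply tvar_prime
    intro hh
    have := w.injective hh
    have := Fin.val_eq_of_eq this
    simp at this
  · right; rfl

lemma cfac_dvd_Dpoly (w : Equiv.Perm (Fin n)) (i : Fin n) : cfac r n w i ∣ Dpoly r n := by
  unfold cfac
  split
  · rename_i h
    have hne : w i ≠ w ⟨(i : ℕ) + 1, h⟩ := by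
      intro hh
      have := Fin.val_eq_of_eq (w.injective hh)
      simp at this
    rcases lt_or_gt_of_ne hne with hlt | hlt
    · have hmem : (w i, w ⟨(i : ℕ) + 1, h⟩) ∈ pairsF n := mem_pairsF.mpr hlt
      have := Finset.dvd_prod_of_mem (fun p : Fin n × Fin n => tvar r n p.2 - tvar r n p.1) hmem
      rw [Dpoly]
      exact this
    · have hmem : (w ⟨(i : ℕ) + 1, h⟩, w i) ∈ pairsF n := mem_pairsF.mpr hlt
      have := Finset.dvd_prod_of_mem (fun p : Fin n × Fin n => tvar r n p.2 - tvar r n p.1) hmem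
      rw [Dpoly]
      have h2 : tvar r n (w ⟨(i : ℕ) + 1, h⟩) - tvar r n (w i)
          = -(tvar r n (w i) - tvar r n (w ⟨(i : ℕ) + 1, h⟩)) := by ring
      rw [h2]
      exact neg_dvd.mpr this
  · exact one_dvd _

lemma prod_dvd_of_primes {α R : Type*} [CommMonoidWithZero R] [IsCancelMulZero R]
    (s : Finset α) (f : α → R) (z : R)
    (h1 : ∀ i ∈ s, Prime (f i) ∨ f i = 1) (h2 : ∀ i ∈ s, f i ∣ z)
    (h3 : ∀ i ∈ s, ∀ j ∈ s, i ≠ j → Prime (f i) → ¬ f i ∣ f j) :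
    (∏ i ∈ s, f i) ∣ z := by
  classical
  induction s using Finset.induction_on with
  | empty => simpa using one_dvd z
  | @insert a s ha ih =>
    rw [Finset.prod_insert ha]
    have hps : (∏ i ∈ s, f i) ∣ z :=
      ih (fun i hi => h1 i (Finset.mem_insert_of_mem hi))
        (fun i hi => h2 i (Finset.mem_insert_of_mem hi))
        (fun i hi j hj hij => h3 i (Finset.mem_insert_of_mem hi) j (Finset.mem_insert_of_mem hj) hij)
    rcases h1 a (Finset.mem_insert_self a s) with hp | h1'
    · obtain ⟨m, hm⟩ := hps
      have hfa : f a ∣ (∏ i ∈ s, f i) * m := hm ▸ h2 a (Finset.mem_insert_self a s)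
      rcases hp.dvd_or_dvd hfa with hd | hd
      swap
      · obtain ⟨m', hm'⟩ := hd
        exact ⟨m', by rw [hm, hm', mul_left_comm, mul_assoc]⟩
      · obtain ⟨j, hj, hdj⟩ := hp.exists_mem_finset_dvd hd
        exact absurd hdj (h3 a (Finset.mem_insert_self a s) j (Finset.mem_insert_of_mem hj)
          (by rintro rfl; exact ha hj) hp)
    · rw [h1', one_mul]; exact hps

lemma cfac_nondvd {r n : ℕ} (w : Equiv.Perm (Fin n)) {i j : Fin n} (hij : i ≠ j)
    (hp : Prime (cfac r n w i)) : ¬ cfac r n w i ∣ cfac r n w j := by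
  intro hdvd
  simp only [cfac] at hdvd hp
  by_cases hi : (i : ℕ) + 1 < n
  · by_cases hj : (j : ℕ) + 1 < n
    · rw [dif_pos hi, dif_pos hj] at hdvd
      have hne : w j ≠ w ⟨(j : ℕ) + 1, hj⟩ := by
        intro hh
        have := Fin.val_eq_of_eq (w.injective hh)
        simp at this
      rcases tvar_dvd (Ne.symm hne) hdvd with ⟨h1, h2⟩ | ⟨h1, h2⟩
      · exact hij (w.injective h2).symm
      · have e1 := Fin.val_eq_of_eq (w.injective h1)
        have e2 := Fin.val_eq_of_eq (w.injective h2)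
        simp only [Fin.val_mk] at e1 e2
        omega
    · rw [dif_neg hj, dif_pos hi] at hdvd
      rw [dif_pos hi] at hp
      exact hp.not_dvd_one hdvd
  · rw [dif_neg hi] at hp
    exact not_prime_one hp

lemma dprod_dvd_Dpoly {r n : ℕ} (w : Equiv.Perm (Fin n)) : dprod r n w ∣ Dpoly r n := by
  rw [dprod]
  exact prod_dvd_of_primes _ _ _ (fun i _ => cfac_prime_or_one w i)
    (fun i _ => cfac_dvd_Dpoly w i)
    (fun i _ j _ hij hp => cfac_nondvd w hij hp)

lemma cfac_ne_zero {r n : ℕ} (w : Equiv.Perm (Fin n)) (i : Fin n) : cfac r n w i ≠ 0 := by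
  rcases cfac_prime_or_one (r := r) w i with h | h
  · exact h.ne_zero
  · rw [h]; exact one_ne_zero

lemma dprod_ne_zero {r n : ℕ} (w : Equiv.Perm (Fin n)) : dprod r n w ≠ 0 := by
  rw [dprod]
  exact Finset.prod_ne_zero_iff.mpr (fun i _ => cfac_ne_zero w i)

lemma Dpoly_ne_zero {r n : ℕ} : Dpoly r n ≠ 0 := by
  rw [Dpoly]
  refine Finset.prod_ne_zero_iff.mpr (fun p hp => ?_)
  exact (tvar_prime (by
    have := mem_pairsF.mp hp
    exact fun hh => absurd (hh ▸ this) (lt_irrefl _))).ne_zero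

end lemmas



lemma swap_image_of_mem {α : Type*} [DecidableEq α] {S : Set α} {x y : α}
    (hx : x ∈ S) (hy : y ∈ S) : Equiv.swap x y '' S = S := by
  apply Set.Subset.antisymm
  · rintro - ⟨z, hz, rfl⟩
    rcases eq_or_ne z x with rfl | h1
    · rwa [Equiv.swap_apply_left]
    rcases eq_or_ne z y with rfl | h2
    · rwa [Equiv.swap_apply_right]
    rwa [Equiv.swap_apply_of_ne_of_ne h1 h2]
  · intro z hz
    rcases eq_or_ne z x with rfl | h1
    · exact ⟨y, hy, Equiv.swap_apply_right _ _⟩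
    rcases eq_or_ne z y with rfl | h2
    · exact ⟨x, hx, Equiv.swap_apply_left _ _⟩
    exact ⟨z, hz, Equiv.swap_apply_of_ne_of_ne h1 h2⟩

lemma swap_image_of_not_mem {α : Type*} [DecidableEq α] {S : Set α} {x y : α}
    (hx : x ∉ S) (hy : y ∉ S) : Equiv.swap x y '' S = S := by
  have : ∀ z ∈ S, Equiv.swap x y z = z := fun z hz =>
    Equiv.swap_apply_of_ne_of_ne (fun h => hx (h ▸ hz)) (fun h => hy (h ▸ hz))
  rw [Set.image_congr this]; exact Set.image_id S

lemma matroid_swap_cases {α : Type*} (M : Matroid α) (S : Set α) (x y : α) :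
    ((x ∉ M.closure S ↔ y ∉ M.closure S) ∧
      (y ∉ M.closure (insert x S) ↔ x ∉ M.closure (insert y S)))
    ∨ ((x ∉ M.closure S ↔ x ∉ M.closure (insert y S)) ∧
      (y ∉ M.closure (insert x S) ↔ y ∉ M.closure S)) := by
  by_cases hx : x ∈ M.closure S
  · right
    constructor
    · have : x ∈ M.closure (insert y S) := M.closure_subset_closure (Set.subset_insert y S) hx
      simp [hx, this]
    · rw [Matroid.closure_insert_eq_of_mem_closure hx]
  · by_cases hy2 : y ∈ M.closure (insert x S)
    · by_cases hy : y ∈ M.closure S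
      · right
        constructor
        · rw [Matroid.closure_insert_eq_of_mem_closure hy]
        · simp [hy2, hy]
      · left
        have hex := Matroid.closure_exchange (M := M) ⟨hy2, hy⟩
        constructor
        · simp [hx, hy]
        · simp [hy2, hex.1]
    · left
      have hy : y ∉ M.closure S := fun h => hy2 (M.closure_subset_closure (Set.subset_insert x S) h)
      have hx2 : x ∉ M.closure (insert y S) := by
        intro h
        exact hy2 (Matroid.closure_exchange (M := M) ⟨h, hx⟩).1
      simp [hx, hy, hy2, hx2]

lemma firstBasis_swap {n : ℕ} (M : Matroid (Fin n)) (w : Equiv.Perm (Fin n))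
    (p q : Fin n) (hq : (q : ℕ) = (p : ℕ) + 1) :
    (∀ j, (j ∈ firstBasis M (Equiv.swap (w p) (w q) * w) ↔ j ∈ firstBasis M w)) ∨
    (∀ j, (j ∈ firstBasis M (Equiv.swap (w p) (w q) * w) ↔
      Equiv.swap (w p) (w q) j ∈ firstBasis M w)) := by
  set x := w p with hxdef
  set y := w q with hydef
  set τ := Equiv.swap x y with hτdef
  set w' := τ * w with hw'def
  have hpq : p ≠ q := by
    intro h; rw [h] at hq; omega
  have hxy : x ≠ y := fun h => hpq (w.injective h)
  -- basic symm computations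
  have hsymm : ∀ j, w'.symm j = w.symm (τ j) := by
    intro j
    have : w'.symm = w.symm * τ.symm := by
      rw [hw'def]; exact mul_inv_rev τ w
    rw [this]
    simp [hτdef, Equiv.symm_swap]
  have hcoe : ⇑w' = ⇑τ ∘ ⇑w := by rw [hw'def]; rfl
  have hwsx : w.symm x = p := w.symm_apply_apply p
  have hwsy : w.symm y = q := w.symm_apply_apply q
  set S : Set (Fin n) := ⇑w '' {i | i < p} with hSdef
  have hx_notS : x ∉ S := by
    rintro ⟨i, hi, hix⟩
    have : i = p := w.injective hix
    subst this
    simp only [Set.mem_setOf_eq] at hi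
    exact lt_irrefl _ hi
  have hy_notS : y ∉ S := by
    rintro ⟨i, hi, hiy⟩
    have : i = q := w.injective hiy
    subst this
    simp only [Set.mem_setOf_eq, Fin.lt_def] at hi
    omega
  have himg_p : ⇑w' '' {i | i < p} = S := by
    rw [hcoe, Set.image_comp, ← hSdef]
    exact swap_image_of_not_mem hx_notS hy_notS
  have hprefq : {i : Fin n | i < q} = insert p {i : Fin n | i < p} := by
    ext i
    simp only [Set.mem_setOf_eq, Set.mem_insert_iff, Fin.lt_def, hq]
    constructor
    · intro h
      rcases Nat.lt_succ_iff_lt_or_eq.mp h with h' | h'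
      · right; exact h'
      · left; exact Fin.ext h'
    · rintro (rfl | h) <;> omega
  have himgq_w : ⇑w '' {i : Fin n | i < q} = insert x S := by
    rw [hprefq, Set.image_insert_eq]
  have hτx : τ x = y := Equiv.swap_apply_left x y
  have hτy : τ y = x := Equiv.swap_apply_right x y
  have himgq_w' : ⇑w' '' {i : Fin n | i < q} = insert y S := by
    rw [hcoe, Set.image_comp, himgq_w, Set.image_insert_eq, hτx, hτdef,
      swap_image_of_not_mem hx_notS hy_notS]
  -- membership characterizations
  have mem_w_x : x ∈ firstBasis M w ↔ x ∉ M.closure S := by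
    simp only [firstBasis, Set.mem_setOf_eq, hwsx, hSdef]
  have mem_w_y : y ∈ firstBasis M w ↔ y ∉ M.closure (insert x S) := by
    simp only [firstBasis, Set.mem_setOf_eq, hwsy, himgq_w]
  have hw'sx : w'.symm x = q := by rw [hsymm, hτx, hwsy]
  have hw'sy : w'.symm y = p := by rw [hsymm, hτy, hwsx]
  have mem_w'_y : y ∈ firstBasis M w' ↔ y ∉ M.closure S := by
    simp only [firstBasis, Set.mem_setOf_eq, hw'sy, himg_p]
  have mem_w'_x : x ∈ firstBasis M w' ↔ x ∉ M.closure (insert y S) := by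
    simp only [firstBasis, Set.mem_setOf_eq, hw'sx, himgq_w']
  -- other elements
  have mem_other : ∀ j, j ≠ x → j ≠ y → (j ∈ firstBasis M w' ↔ j ∈ firstBasis M w) := by
    intro j hjx hjy
    have hτj : τ j = j := Equiv.swap_apply_of_ne_of_ne hjx hjy
    have hksymm : w'.symm j = w.symm j := by rw [hsymm, hτj]
    set k := w.symm j with hkdef
    have hkp : k ≠ p := fun h => hjx (by rw [hxdef, ← h, hkdef, w.apply_symm_apply])
    have hkq : k ≠ q := fun h => hjy (by rw [hydef, ← h, hkdef, w.apply_symm_apply])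
    have himg_k : ⇑w' '' {i : Fin n | i < k} = ⇑w '' {i : Fin n | i < k} := by
      rw [hcoe, Set.image_comp, hτdef]
      rcases le_or_gt (k : ℕ) (p : ℕ) with hk | hk
      · apply swap_image_of_not_mem
        · rintro ⟨i, hi, hix⟩
          have : i = p := w.injective hix
          subst this
          simp only [Set.mem_setOf_eq, Fin.lt_def] at hi; omega
        · rintro ⟨i, hi, hiy⟩
          have : i = q := w.injective hiy
          subst this
          simp only [Set.mem_setOf_eq, Fin.lt_def] at hi; omega
      · have hkq' : (q : ℕ) < (k : ℕ) := by
          have h1 : (k : ℕ) ≠ (p : ℕ) := fun h => hkp (Fin.ext h)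
          have h2 : (k : ℕ) ≠ (q : ℕ) := fun h => hkq (Fin.ext h)
          omega
        apply swap_image_of_mem
        · exact ⟨p, by simp only [Set.mem_setOf_eq, Fin.lt_def]; omega, rfl⟩
        · exact ⟨q, by simp only [Set.mem_setOf_eq, Fin.lt_def]; omega, rfl⟩
    simp only [firstBasis, Set.mem_setOf_eq, hksymm, ← hkdef, himg_k]
  rcases matroid_swap_cases M S x y with h | h
  · right
    intro j
    by_cases hjx : j = x
    · subst hjx
      rw [hτx, mem_w'_x, mem_w_y]
      exact h.2.symm
    by_cases hjy : j = y
    · subst hjy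
      rw [hτy, mem_w'_y, mem_w_x]
      exact h.1.symm
    · rw [Equiv.swap_apply_of_ne_of_ne hjx hjy]
      exact mem_other j hjx hjy
  · left
    intro j
    by_cases hjx : j = x
    · subst hjx
      rw [mem_w'_x, mem_w_x]
      exact h.1.symm
    by_cases hjy : j = y
    · subst hjy
      rw [mem_w'_y, mem_w_y]
      exact h.2.symm
    · exact mem_other j hjx hjy


noncomputable def Npoly (r n : ℕ) (M : Matroid (Fin n)) (w : Equiv.Perm (Fin n)) :
    MvPolynomial (Fin r ⊕ Fin n) ℚ :=
  ∏ j : Fin n, if j ∈ firstBasis M w then 1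
    else ∏ i : Fin r, (X (Sum.inl i) + tvar r n j)

section key
variable {r n : ℕ}

lemma w_succ_ne (w : Equiv.Perm (Fin n)) (i : Fin n) (h : (i : ℕ) + 1 < n) :
    w i ≠ w ⟨(i : ℕ) + 1, h⟩ := by
  intro hh
  have := Fin.val_eq_of_eq (w.injective hh)
  simp at this

lemma key_dvd (M : Matroid (Fin n)) (g : Equiv.Perm (Fin n) → MvPolynomial (Fin r ⊕ Fin n) ℚ)
    (hg : ∀ w, Dpoly r n = dprod r n w * g w) {a b : Fin n} (hab : a ≠ b) :
    (tvar r n b - tvar r n a) ∣ ∑ w : Equiv.Perm (Fin n), Npoly r n M w * g w := by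
  set y : MvPolynomial (Fin r ⊕ Fin n) ℚ := tvar r n b - tvar r n a with hydef
  have hy : Prime y := tvar_prime hab.symm
  set I : Ideal (MvPolynomial (Fin r ⊕ Fin n) ℚ) := Ideal.span {y} with hIdef
  haveI hIp : I.IsPrime := (Ideal.span_singleton_prime hy.ne_zero).mpr hy
  set π : MvPolynomial (Fin r ⊕ Fin n) ℚ →+* _ := Ideal.Quotient.mk I with hπdef
  rw [← Ideal.Quotient.eq_zero_iff_dvd, ← hIdef, ← hπdef, map_sum]
  set τ : Equiv.Perm (Fin n) := Equiv.swap a b with hτdef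
  have hτa : τ a = b := Equiv.swap_apply_left a b
  have hτb : τ b = a := Equiv.swap_apply_right a b
  have hππ : ∀ z, π z = 0 ↔ y ∣ z := by
    intro z
    rw [hπdef, hIdef]
    exact Ideal.Quotient.eq_zero_iff_dvd y z
  have hπt : ∀ j : Fin n, π (tvar r n (τ j)) = π (tvar r n j) := by
    intro j
    rcases eq_or_ne j a with hja | hja
    · rw [hja, hτa, ← sub_eq_zero, ← map_sub, hππ]
    rcases eq_or_ne j b with hjb | hjb
    · rw [hjb, hτb, ← sub_eq_zero, ← map_sub, hππ, hydef]
      rw [show tvar r n a - tvar r n b = -(tvar r n b - tvar r n a) by ring]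
      exact dvd_neg.mpr dvd_rfl
    · rw [hτdef, Equiv.swap_apply_of_ne_of_ne hja hjb]
  have hπc : ∀ (w : Equiv.Perm (Fin n)) (i : Fin n),
      π (cfac r n (τ * w) i) = π (cfac r n w i) := by
    intro w i
    simp only [cfac]
    split
    · rename_i h
      simp only [Equiv.Perm.mul_apply]
      rw [map_sub, map_sub, hπt, hπt]
    · rfl
  -- adjacency predicate
  set Adj : Equiv.Perm (Fin n) → Prop := fun w => ∃ (i : Fin n) (h : (i : ℕ) + 1 < n),
    (w i = a ∧ w ⟨(i : ℕ) + 1, h⟩ = b) ∨ (w i = b ∧ w ⟨(i : ℕ) + 1, h⟩ = a) with hAdjdef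
  have hAdj_swap : ∀ w, Adj w → Adj (τ * w) := by
    intro w ⟨i, h, hc⟩
    refine ⟨i, h, ?_⟩
    simp only [Equiv.Perm.mul_apply]
    rcases hc with ⟨h1, h2⟩ | ⟨h1, h2⟩
    · right; rw [h1, h2, hτa, hτb]; exact ⟨rfl, rfl⟩
    · left; rw [h1, h2, hτa, hτb]; exact ⟨rfl, rfl⟩
  have hττw : ∀ w : Equiv.Perm (Fin n), τ * (τ * w) = w := by
    intro w
    rw [← mul_assoc, hτdef, Equiv.swap_mul_self, one_mul]
  -- non-adjacent : y divides g w
  have hnadj : ∀ w, ¬ Adj w → π (g w) = 0 := by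
    intro w hw
    rw [hππ]
    have hyΔ : y ∣ Dpoly r n := by
      rcases lt_or_gt_of_ne hab with hlt | hlt
      · have hmem : (a, b) ∈ pairsF n := mem_pairsF.mpr hlt
        have := Finset.dvd_prod_of_mem
          (fun p : Fin n × Fin n => tvar r n p.2 - tvar r n p.1) hmem
        rw [Dpoly]; exact this
      · have hmem : (b, a) ∈ pairsF n := mem_pairsF.mpr hlt
        have := Finset.dvd_prod_of_mem
          (fun p : Fin n × Fin n => tvar r n p.2 - tvar r n p.1) hmem
        rw [Dpoly, hydef]
        rw [show tvar r n b - tvar r n a = -(tvar r n a - tvar r n b) by ring]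
        exact neg_dvd.mpr this
    have hynd : ¬ y ∣ dprod r n w := by
      intro hd
      rw [dprod] at hd
      obtain ⟨i, -, hdi⟩ := hy.exists_mem_finset_dvd hd
      by_cases h : (i : ℕ) + 1 < n
      · rw [cfac, dif_pos h] at hdi
        rcases tvar_dvd (Ne.symm (w_succ_ne w i h)) hdi with ⟨h1, h2⟩ | ⟨h1, h2⟩
        · exact hw ⟨i, h, Or.inl ⟨h2, h1⟩⟩
        · exact hw ⟨i, h, Or.inr ⟨h2, h1⟩⟩
      · rw [cfac, dif_neg h] at hdi
        exact hy.not_dvd_one hdi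
    have : y ∣ dprod r n w * g w := (hg w) ▸ hyΔ
    exact (hy.dvd_or_dvd this).resolve_left hynd
  -- rest product
  set rest : Equiv.Perm (Fin n) → Fin n → MvPolynomial (Fin r ⊕ Fin n) ℚ :=
    fun w i => ∏ i' ∈ Finset.univ.erase i, cfac r n w i' with hrestdef
  have hdsplit : ∀ (w : Equiv.Perm (Fin n)) (i : Fin n), dprod r n w = cfac r n w i * rest w i := by
    intro w i
    rw [dprod, hrestdef, ← Finset.mul_prod_erase Finset.univ _ (Finset.mem_univ i)]
  have hπrest : ∀ (w : Equiv.Perm (Fin n)) (i : Fin n), π (rest (τ * w) i) = π (rest w i) := by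
    intro w i
    rw [hrestdef]
    simp only [map_prod]
    exact Finset.prod_congr rfl (fun i' _ => hπc w i')
  -- adjacent case: π g (τ * w) = - π g w  and  π N (τ * w) = π N w
  have hadj_g : ∀ w, ∀ (i : Fin n) (h : (i : ℕ) + 1 < n),
      ((w i = a ∧ w ⟨(i : ℕ) + 1, h⟩ = b) ∨ (w i = b ∧ w ⟨(i : ℕ) + 1, h⟩ = a)) →
      π (g (τ * w)) = - π (g w) := by
    intro w i h hc
    have hcneg : cfac r n (τ * w) i = - cfac r n w i := by
      rw [cfac, cfac, dif_pos h, dif_pos h]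
      simp only [Equiv.Perm.mul_apply]
      rcases hc with ⟨h1, h2⟩ | ⟨h1, h2⟩
      · rw [h1, h2, hτa, hτb]; ring
      · rw [h1, h2, hτa, hτb]; ring
    have hπrw : ¬ y ∣ rest w i := by
      intro hd
      rw [hrestdef] at hd
      obtain ⟨i', hi'mem, hdi⟩ := hy.exists_mem_finset_dvd hd
      have hi'ne : i' ≠ i := Finset.ne_of_mem_erase hi'mem
      by_cases h' : (i' : ℕ) + 1 < n
      · rw [cfac, dif_pos h'] at hdi
        rcases tvar_dvd (Ne.symm (w_succ_ne w i' h')) hdi with ⟨h1, h2⟩ | ⟨h1, h2⟩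
        · rcases hc with ⟨h3, h4⟩ | ⟨h3, h4⟩
          · exact hi'ne (w.injective (h2.trans h3.symm))
          · have e1 := Fin.val_eq_of_eq (w.injective (h1.trans h3.symm))
            have e2 := Fin.val_eq_of_eq (w.injective (h2.trans h4.symm))
            simp only [Fin.val_mk] at e1 e2
            omega
        · rcases hc with ⟨h3, h4⟩ | ⟨h3, h4⟩
          · have e1 := Fin.val_eq_of_eq (w.injective (h1.trans h3.symm))
            have e2 := Fin.val_eq_of_eq (w.injective (h2.trans h4.symm))
            simp only [Fin.val_mk] at e1 e2
            omega
          · exact hi'ne (w.injective (h2.trans h3.symm))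
      · rw [cfac, dif_neg h'] at hdi
        exact hy.not_dvd_one hdi
    have hπrw0 : π (rest w i) ≠ 0 := fun h0 => hπrw ((hππ _).mp h0)
    -- polynomial identity
    have hpoly : rest w i * g w = -(rest (τ * w) i * g (τ * w)) := by
      have e1 : cfac r n w i * (rest w i * g w)
          = cfac r n w i * (-(rest (τ * w) i * g (τ * w))) := by
        have h1 := hg w
        have h2 := hg (τ * w)
        rw [hdsplit w i] at h1
        rw [hdsplit (τ * w) i, hcneg] at h2
        rw [mul_assoc] at h1 h2
        rw [← h1, h2]
        ring
      exact mul_left_cancel₀ (cfac_ne_zero w i) e1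
    have := congrArg π hpoly
    rw [map_mul, map_neg, map_mul, hπrest] at this
    have h2 : π (rest w i) * π (g w) + π (rest w i) * π (g (τ * w)) = 0 := by
      rw [this]; ring
    rw [← mul_add] at h2
    have h3 := (mul_eq_zero.mp h2).resolve_left hπrw0
    linear_combination h3
  have hadj_N : ∀ w, ∀ (i : Fin n) (h : (i : ℕ) + 1 < n),
      ((w i = a ∧ w ⟨(i : ℕ) + 1, h⟩ = b) ∨ (w i = b ∧ w ⟨(i : ℕ) + 1, h⟩ = a)) →
      π (Npoly r n M (τ * w)) = π (Npoly r n M w) := by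
    intro w i h hc
    have hτswap : τ = Equiv.swap (w i) (w ⟨(i : ℕ) + 1, h⟩) := by
      rcases hc with ⟨h1, h2⟩ | ⟨h1, h2⟩
      · rw [h1, h2, hτdef]
      · rw [h1, h2, hτdef, Equiv.swap_comm]
    rcases firstBasis_swap M w i ⟨(i : ℕ) + 1, h⟩ rfl with hbr | hbr
    · rw [← hτswap] at hbr
      have : Npoly r n M (τ * w) = Npoly r n M w := by
        rw [Npoly, Npoly]
        exact Finset.prod_congr rfl (fun j _ => if_congr (hbr j) rfl rfl)
      rw [this]
    · rw [← hτswap] at hbr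
      rw [Npoly, Npoly, map_prod, map_prod]
      rw [← Equiv.prod_comp τ (fun j => π (if j ∈ firstBasis M (τ * w) then 1
        else ∏ i' : Fin r, (X (Sum.inl i') + tvar r n j)))]
      refine Finset.prod_congr rfl (fun j _ => ?_)
      have hmem : τ j ∈ firstBasis M (τ * w) ↔ j ∈ firstBasis M w := by
        rw [hbr (τ j)]
        have : τ (τ j) = j := by
          rw [hτdef, Equiv.swap_apply_self]
        rw [this]
      rw [apply_ite π, apply_ite π, if_congr hmem rfl rfl]
      by_cases hjB : j ∈ firstBasis M w
      · rw [if_pos hjB, if_pos hjB]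
      · rw [if_neg hjB, if_neg hjB, map_prod, map_prod]
        exact Finset.prod_congr rfl (fun i' _ => by rw [map_add, map_add, hπt])
  -- final cancellation via involution
  apply Finset.sum_ninvolution (fun w => τ * w)
  · intro w
    by_cases hw : Adj w
    · obtain ⟨i, h, hc⟩ := hw
      rw [map_mul, map_mul, hadj_g w i h hc, hadj_N w i h hc]
      ring
    · have hw2 : ¬ Adj (τ * w) := by
        intro h2
        have := hAdj_swap _ h2
        rw [hττw] at this
        exact hw this
      rw [map_mul, map_mul, hnadj w hw, hnadj _ hw2]
      ring
  · intro w _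
    intro heq
    have : τ = 1 := mul_right_cancel (by rw [heq, one_mul] : τ * w = 1 * w)
    exact hab (Equiv.swap_eq_one_iff.mp (hτdef ▸ this))
  · intro w; exact Finset.mem_univ _
  · intro w; exact hττw w
end key

/-- For every matroid `M` of rank `r` on `{1,…,n}`, the a priori rational function `C(M)`
is a polynomial in `u_1,…,u_r` and `t_1,…,t_n`. -/
theorem Cclass_is_polynomial (r n : ℕ) (hr : 1 ≤ r) (hrn : r ≤ n)
    (M : Matroid (Fin n)) (hE : M.E = Set.univ)
    (hrank : ∀ B : Set (Fin n), M.IsBase B → B.ncard = r) :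
    ∃ p : MvPolynomial (Fin r ⊕ Fin n) ℚ,
      algebraMap (MvPolynomial (Fin r ⊕ Fin n) ℚ) (F r n) p = Cclass r n M := by
  classical
  choose g hgw using fun w : Equiv.Perm (Fin n) => dprod_dvd_Dpoly (r := r) (n := n) w
  set P : MvPolynomial (Fin r ⊕ Fin n) ℚ := ∑ w : Equiv.Perm (Fin n), Npoly r n M w * g w
    with hPdef
  have hΔP : Dpoly r n ∣ P := by
    rw [Dpoly]
    apply prod_dvd_of_primes
    · intro p hp
      exact Or.inl (tvar_prime (ne_of_gt (mem_pairsF.mp hp)))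
    · intro p hp
      exact key_dvd M g hgw (ne_of_lt (mem_pairsF.mp hp))
    · intro p hp q hq hpq hprime hdvd
      have h1 := mem_pairsF.mp hp
      have h2 := mem_pairsF.mp hq
      rcases tvar_dvd (ne_of_gt h2) hdvd with ⟨e1, e2⟩ | ⟨e1, e2⟩
      · exact hpq (Prod.ext e2 e1).symm
      · rw [e2] at h2
        rw [e1] at h2
        exact absurd (h1.trans h2) (lt_irrefl _)
  obtain ⟨pfin, hP⟩ := hΔP
  refine ⟨pfin, ?_⟩
  set φ := algebraMap (MvPolynomial (Fin r ⊕ Fin n) ℚ) (F r n) with hφdef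
  have hφinj : Function.Injective φ := IsFractionRing.injective _ _
  have hΔ0 : φ (Dpoly r n) ≠ 0 := fun h =>
    Dpoly_ne_zero (hφinj (h.trans (map_zero φ).symm))
  apply mul_right_cancel₀ hΔ0
  have hterm : ∀ w : Equiv.Perm (Fin n),
      ((∏ j : Fin n, if j ∈ firstBasis M w then 1
        else ∏ i : Fin r, (U r n i + T r n j)) *
      ∏ i : Fin n, (if h : (i : ℕ) + 1 < n
        then (T r n (w ⟨(i : ℕ) + 1, h⟩) - T r n (w i))⁻¹ else 1))
        * φ (Dpoly r n) = φ (Npoly r n M w * g w) := by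
    intro w
    have hd0 : φ (dprod r n w) ≠ 0 := fun h =>
      dprod_ne_zero w (hφinj (h.trans (map_zero φ).symm))
    have hA : (∏ j : Fin n, if j ∈ firstBasis M w then 1
        else ∏ i : Fin r, (U r n i + T r n j)) = φ (Npoly r n M w) := by
      rw [Npoly, map_prod]
      refine Finset.prod_congr rfl (fun j _ => ?_)
      rw [apply_ite φ, map_one, map_prod]
      refine if_congr Iff.rfl rfl (Finset.prod_congr rfl (fun i _ => ?_))
      rw [map_add]
      rfl
    have hφd : φ (dprod r n w) = ∏ i : Fin n, (if h : (i : ℕ) + 1 < n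
        then (T r n (w ⟨(i : ℕ) + 1, h⟩) - T r n (w i)) else 1) := by
      rw [dprod, map_prod]
      refine Finset.prod_congr rfl (fun i _ => ?_)
      rw [cfac, apply_dite φ]
      split
      · rw [map_sub]; rfl
      · rw [map_one]
    have hB : (∏ i : Fin n, (if h : (i : ℕ) + 1 < n
        then (T r n (w ⟨(i : ℕ) + 1, h⟩) - T r n (w i))⁻¹ else 1))
        = (φ (dprod r n w))⁻¹ := by
      rw [hφd, ← Finset.prod_inv_distrib]
      refine Finset.prod_congr rfl (fun i _ => ?_)
      split
      · rfl
      · rw [inv_one]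
    rw [hA, hB, map_mul, mul_assoc]
    congr 1
    have : φ (Dpoly r n) = φ (dprod r n w) * φ (g w) := by
      rw [← map_mul, ← hgw w]
    rw [this]
    exact inv_mul_cancel_left₀ hd0 _
  have hkey : Cclass r n M * φ (Dpoly r n) = φ P := by
    rw [Cclass, Finset.sum_mul, hPdef, map_sum]
    exact Finset.sum_congr rfl (fun w _ => hterm w)
  rw [hkey, hP, map_mul]
  ring
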